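/- Let p > 1. Then the negative-order moments of the free Poisson distribution fp(p) satisfy m_{−1}(fp(p)) = ∫ x^{−1} dfp(p)(x) = 1/(p−1) and m_{−2}(fp(p)) = ∫ x^{−2} dfp(p)(x) = p/(p−1)³. -/

import Mathlib

open MeasureTheory Set Real intervalIntegral
open scoped NNReal ENNReal

section aux
variable {a b : ℝ}

variable {a b : ℝ}

lemma hasDerivAt_q (a b x : ℝ) :
    HasDerivAt (fun y => (b - y) * (y - a)) (a + b - 2 * x) x := by
  have h := (((hasDerivAt_id x).const_sub b).mul ((hasDerivAt_id x).sub_const a))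
  simp only [id] at h
  refine h.congr_deriv (Eq.symm ?_); ring

lemma hasDerivAt_M (ha : 0 < a) (hab : a < b) {x : ℝ} (hx : x ∈ Ioo a b) :
    HasDerivAt (fun y => ((a + b) * y - 2 * (a * b)) / ((b - a) * y))
      (2 * (a * b) / ((b - a) * x ^ 2)) x := by
  have hx0 : 0 < x := lt_trans ha hx.1
  have hba : (0:ℝ) < b - a := by linarith
  have hn : HasDerivAt (fun y => (a + b) * y - 2 * (a * b)) (a + b) x := by
    have := ((hasDerivAt_id x).const_mul (a + b)).sub_const (2 * (a * b))
    simpa using this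
  have hd : HasDerivAt (fun y => (b - a) * y) (b - a) x := by
    simpa using (hasDerivAt_id x).const_mul (b - a)
  have h := hn.div hd (by positivity)
  refine h.congr_deriv (Eq.symm ?_)
  field_simp
  ring

lemma M_mem (ha : 0 < a) (hab : a < b) {x : ℝ} (hx : x ∈ Ioo a b) :
    ((a + b) * x - 2 * (a * b)) / ((b - a) * x) ≠ -1 ∧
    ((a + b) * x - 2 * (a * b)) / ((b - a) * x) ≠ 1 := by
  have hx0 : 0 < x := lt_trans ha hx.1
  have hba : (0:ℝ) < b - a := by linarith
  have h1 := hx.1; have h2 := hx.2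
  constructor
  · intro h; rw [div_eq_iff (by positivity)] at h; nlinarith
  · intro h; rw [div_eq_iff (by positivity)] at h; nlinarith

lemma L_mem (hab : a < b) {x : ℝ} (hx : x ∈ Ioo a b) :
    (2 * x - (a + b)) / (b - a) ≠ -1 ∧ (2 * x - (a + b)) / (b - a) ≠ 1 := by
  have hba : (0:ℝ) < b - a := by linarith
  have h1 := hx.1; have h2 := hx.2
  constructor
  · intro h; rw [div_eq_iff (by positivity)] at h; nlinarith
  · intro h; rw [div_eq_iff (by positivity)] at h; nlinarith

lemma sqrt_one_sub_M_sq (ha : 0 < a) (hab : a < b) {x : ℝ} (hx : x ∈ Ioo a b) :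
    Real.sqrt (1 - (((a + b) * x - 2 * (a * b)) / ((b - a) * x)) ^ 2)
      = 2 * Real.sqrt (a * b) * Real.sqrt ((b - x) * (x - a)) / ((b - a) * x) := by
  have hx0 : 0 < x := lt_trans ha hx.1
  have hq : 0 < (b - x) * (x - a) := by have := hx.1; have := hx.2; nlinarith
  have hW : (0:ℝ) < Real.sqrt (a * b) := Real.sqrt_pos.2 (mul_pos ha (lt_trans ha hab))
  have hS : 0 < Real.sqrt ((b - x) * (x - a)) := Real.sqrt_pos.2 hq
  have h1 : Real.sqrt ((b - x) * (x - a)) ^ 2 = (b - x) * (x - a) := Real.sq_sqrt hq.le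
  have h2 : Real.sqrt (a * b) ^ 2 = a * b := Real.sq_sqrt (mul_pos ha (lt_trans ha hab)).le
  set S := Real.sqrt ((b - x) * (x - a)) with hSdef
  set W := Real.sqrt (a * b) with hWdef
  have hba : (0:ℝ) < b - a := by linarith
  rw [show 1 - (((a + b) * x - 2 * (a * b)) / ((b - a) * x)) ^ 2
      = (2 * W * S / ((b - a) * x)) ^ 2 by
    field_simp
    nlinarith [h1, h2]]
  exact Real.sqrt_sq (by positivity)

lemma sqrt_one_sub_L_sq (hab : a < b) {x : ℝ} (hx : x ∈ Ioo a b) :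
    Real.sqrt (1 - ((2 * x - (a + b)) / (b - a)) ^ 2)
      = 2 * Real.sqrt ((b - x) * (x - a)) / (b - a) := by
  have hq : 0 < (b - x) * (x - a) := by have := hx.1; have := hx.2; nlinarith
  have hS : 0 < Real.sqrt ((b - x) * (x - a)) := Real.sqrt_pos.2 hq
  have h1 : Real.sqrt ((b - x) * (x - a)) ^ 2 = (b - x) * (x - a) := Real.sq_sqrt hq.le
  set S := Real.sqrt ((b - x) * (x - a)) with hSdef
  have hba : (0:ℝ) < b - a := by linarith
  rw [show 1 - ((2 * x - (a + b)) / (b - a)) ^ 2 = (2 * S / (b - a)) ^ 2 by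
    field_simp
    nlinarith [h1]]
  exact Real.sqrt_sq (by positivity)

lemma hJ2 (ha : 0 < a) (hab : a < b) :
    ∫ x in a..b, Real.sqrt ((b - x) * (x - a)) / x ^ 2
      = Real.pi * ((a + b) / (2 * Real.sqrt (a * b)) - 1) := by
  have hb : 0 < b := lt_trans ha hab
  have hba : (0:ℝ) < b - a := by linarith
  have hW : (0:ℝ) < Real.sqrt (a * b) := Real.sqrt_pos.2 (mul_pos ha hb)
  set K : ℝ := (a + b) / (2 * Real.sqrt (a * b)) with hK
  set F : ℝ → ℝ := fun y => -(Real.sqrt ((b - y) * (y - a)) / y)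
      + K * Real.arcsin (((a + b) * y - 2 * (a * b)) / ((b - a) * y))
      - Real.arcsin ((2 * y - (a + b)) / (b - a)) with hF
  have hcq : Continuous fun y : ℝ => (b - y) * (y - a) :=
    (continuous_const.sub continuous_id).mul (continuous_id.sub continuous_const)
  have hcont : ∀ y : ℝ, y ≠ 0 → ((b - a) * y ≠ 0) → ContinuousAt F y := by
    intro y hy hy2
    have c1 : ContinuousAt (fun y => Real.sqrt ((b - y) * (y - a)) / y) y :=
      (Real.continuous_sqrt.comp hcq).continuousAt.div continuousAt_id hy
    have c2 : ContinuousAt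
        (fun y => Real.arcsin (((a + b) * y - 2 * (a * b)) / ((b - a) * y))) y :=
      Real.continuous_arcsin.continuousAt.comp
        (ContinuousAt.div ((continuous_const.mul continuous_id).sub
          continuous_const).continuousAt (continuous_const.mul continuous_id).continuousAt hy2)
    have c3 : ContinuousAt (fun y => Real.arcsin ((2 * y - (a + b)) / (b - a))) y :=
      Real.continuous_arcsin.continuousAt.comp
        (ContinuousAt.div ((continuous_const.mul continuous_id).sub
          continuous_const).continuousAt continuousAt_const (by positivity))
    exact (c1.neg.add (continuousAt_const.mul c2)).sub c3
  have hderiv : ∀ x ∈ Ioo a b, HasDerivAt F (Real.sqrt ((b - x) * (x - a)) / x ^ 2) x := by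
    intro x hx
    have hx0 : 0 < x := lt_trans ha hx.1
    have hq : 0 < (b - x) * (x - a) := by have := hx.1; have := hx.2; nlinarith
    have hS : 0 < Real.sqrt ((b - x) * (x - a)) := Real.sqrt_pos.2 hq
    have hM := M_mem ha hab hx
    have hL := L_mem hab hx
    have hs : HasDerivAt (fun y => Real.sqrt ((b - y) * (y - a)))
        ((a + b - 2 * x) / (2 * Real.sqrt ((b - x) * (x - a)))) x :=
      (hasDerivAt_q a b x).sqrt hq.ne'
    have h1 : HasDerivAt (fun y => Real.sqrt ((b - y) * (y - a)) / y)
        (((a + b - 2 * x) / (2 * Real.sqrt ((b - x) * (x - a))) * x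
          - Real.sqrt ((b - x) * (x - a)) * 1) / x ^ 2) x := by
      have := hs.div (hasDerivAt_id x) hx0.ne'
      exact this.congr_deriv (by simp)
    have h2 : HasDerivAt (fun y => Real.arcsin (((a + b) * y - 2 * (a * b)) / ((b - a) * y)))
        ((1 / Real.sqrt (1 - (((a + b) * x - 2 * (a * b)) / ((b - a) * x)) ^ 2))
          * (2 * (a * b) / ((b - a) * x ^ 2))) x :=
      ((Real.hasDerivAt_arcsin hM.1 hM.2).comp x (hasDerivAt_M ha hab hx) :)
    have h3 : HasDerivAt (fun y => Real.arcsin ((2 * y - (a + b)) / (b - a)))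
        ((1 / Real.sqrt (1 - ((2 * x - (a + b)) / (b - a)) ^ 2)) * (2 / (b - a))) x := by
      have hL' : HasDerivAt (fun y => (2 * y - (a + b)) / (b - a)) (2 / (b - a)) x := by
        have := (((hasDerivAt_id x).const_mul 2).sub_const (a + b)).div_const (b - a)
        simpa using this
      exact (Real.hasDerivAt_arcsin hL.1 hL.2).comp x hL'
    have hD := (h1.neg.add (h2.const_mul K)).sub h3
    refine hD.congr_deriv (Eq.symm ?_)
    rw [sqrt_one_sub_M_sq ha hab hx, sqrt_one_sub_L_sq hab hx]
    have hw2 : Real.sqrt (a * b) ^ 2 = a * b := Real.sq_sqrt (mul_pos ha hb).le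
    set S := Real.sqrt ((b - x) * (x - a))
    set W := Real.sqrt (a * b)
    rw [hK]
    field_simp
    ring_nf
    linear_combination (x * (a + b)) * hw2
  have hint : IntervalIntegrable (fun x => Real.sqrt ((b - x) * (x - a)) / x ^ 2)
      MeasureTheory.volume a b := by
    apply ContinuousOn.intervalIntegrable
    apply ContinuousOn.div
    · exact (Real.continuous_sqrt.comp
        ((continuous_const.sub continuous_id).mul (continuous_id.sub continuous_const))).continuousOn
    · exact (continuous_pow 2).continuousOn
    · intro x hx
      rw [uIcc_of_le hab.le] at hx
      have : 0 < x := lt_of_lt_of_le ha hx.1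
      positivity
  have hFa : Filter.Tendsto F (nhdsWithin a (Ioi a)) (nhds (F a)) :=
    ((hcont a ha.ne' (by positivity)).tendsto).mono_left nhdsWithin_le_nhds
  have hFb : Filter.Tendsto F (nhdsWithin b (Iio b)) (nhds (F b)) :=
    ((hcont b hb.ne' (by positivity)).tendsto).mono_left nhdsWithin_le_nhds
  rw [integral_eq_sub_of_hasDerivAt_of_tendsto hab hderiv hint hFa hFb]
  have hMa : ((a + b) * a - 2 * (a * b)) / ((b - a) * a) = -1 := by
    rw [div_eq_iff (by positivity)]; ring
  have hMb : ((a + b) * b - 2 * (a * b)) / ((b - a) * b) = 1 := by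
    rw [div_eq_iff (by positivity)]; ring
  have hLa : (2 * a - (a + b)) / (b - a) = -1 := by
    rw [div_eq_iff (by positivity)]; ring
  have hLb : (2 * b - (a + b)) / (b - a) = 1 := by
    rw [div_eq_iff (by positivity)]; ring
  simp only [hF, hMa, hMb, hLa, hLb, Real.arcsin_one, Real.arcsin_neg_one]
  rw [show (b - b) * (b - a) = 0 by ring, show (b - a) * (a - a) = 0 by ring,
    Real.sqrt_zero]
  rw [hK]
  field_simp
  ring

lemma hJ3 (ha : 0 < a) (hab : a < b) :
    ∫ x in a..b, Real.sqrt ((b - x) * (x - a)) / x ^ 3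
      = Real.pi * ((b - a) ^ 2 / (8 * Real.sqrt (a * b) ^ 3)) := by
  have hb : 0 < b := lt_trans ha hab
  have hba : (0:ℝ) < b - a := by linarith
  have hW : (0:ℝ) < Real.sqrt (a * b) := Real.sqrt_pos.2 (mul_pos ha hb)
  set C : ℝ := (b - a) ^ 2 / (8 * Real.sqrt (a * b) ^ 3) with hC
  set F : ℝ → ℝ := fun y => -(Real.sqrt ((b - y) * (y - a)) / y ^ 2) / 2
      + (a + b) / (4 * (a * b)) * (Real.sqrt ((b - y) * (y - a)) / y)
      + C * Real.arcsin (((a + b) * y - 2 * (a * b)) / ((b - a) * y)) with hF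
  have hcq : Continuous fun y : ℝ => (b - y) * (y - a) :=
    (continuous_const.sub continuous_id).mul (continuous_id.sub continuous_const)
  have hcont : ∀ y : ℝ, y ≠ 0 → ((b - a) * y ≠ 0) → ContinuousAt F y := by
    intro y hy hy2
    have c0 : ContinuousAt (fun y => Real.sqrt ((b - y) * (y - a)) / y ^ 2) y :=
      (Real.continuous_sqrt.comp hcq).continuousAt.div (continuous_pow 2).continuousAt
        (pow_ne_zero 2 hy)
    have c1 : ContinuousAt (fun y => Real.sqrt ((b - y) * (y - a)) / y) y :=
      (Real.continuous_sqrt.comp hcq).continuousAt.div continuousAt_id hy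
    have c2 : ContinuousAt
        (fun y => Real.arcsin (((a + b) * y - 2 * (a * b)) / ((b - a) * y))) y :=
      Real.continuous_arcsin.continuousAt.comp
        (ContinuousAt.div ((continuous_const.mul continuous_id).sub
          continuous_const).continuousAt (continuous_const.mul continuous_id).continuousAt hy2)
    exact ((c0.neg.div_const 2).add (continuousAt_const.mul c1)).add
      (continuousAt_const.mul c2)
  have hderiv : ∀ x ∈ Ioo a b, HasDerivAt F (Real.sqrt ((b - x) * (x - a)) / x ^ 3) x := by
    intro x hx
    have hx0 : 0 < x := lt_trans ha hx.1
    have hq : 0 < (b - x) * (x - a) := by have := hx.1; have := hx.2; nlinarith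
    have hS : 0 < Real.sqrt ((b - x) * (x - a)) := Real.sqrt_pos.2 hq
    have hM := M_mem ha hab hx
    have hs : HasDerivAt (fun y => Real.sqrt ((b - y) * (y - a)))
        ((a + b - 2 * x) / (2 * Real.sqrt ((b - x) * (x - a)))) x :=
      (hasDerivAt_q a b x).sqrt hq.ne'
    have h1 : HasDerivAt (fun y => Real.sqrt ((b - y) * (y - a)) / y ^ 2)
        (((a + b - 2 * x) / (2 * Real.sqrt ((b - x) * (x - a))) * x ^ 2
          - Real.sqrt ((b - x) * (x - a)) * (2 * x)) / (x ^ 2) ^ 2) x := by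
      have := hs.div (hasDerivAt_pow 2 x) (pow_ne_zero 2 hx0.ne')
      exact this.congr_deriv (by simp)
    have h1b : HasDerivAt (fun y => Real.sqrt ((b - y) * (y - a)) / y)
        (((a + b - 2 * x) / (2 * Real.sqrt ((b - x) * (x - a))) * x
          - Real.sqrt ((b - x) * (x - a)) * 1) / x ^ 2) x := by
      have := hs.div (hasDerivAt_id x) hx0.ne'
      exact this.congr_deriv (by simp)
    have h2 : HasDerivAt (fun y => Real.arcsin (((a + b) * y - 2 * (a * b)) / ((b - a) * y)))
        ((1 / Real.sqrt (1 - (((a + b) * x - 2 * (a * b)) / ((b - a) * x)) ^ 2))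
          * (2 * (a * b) / ((b - a) * x ^ 2))) x :=
      ((Real.hasDerivAt_arcsin hM.1 hM.2).comp x (hasDerivAt_M ha hab hx) :)
    have hD := ((h1.neg.div_const 2).add (h1b.const_mul ((a + b) / (4 * (a * b))))).add
      (h2.const_mul C)
    refine hD.congr_deriv (Eq.symm ?_)
    rw [sqrt_one_sub_M_sq ha hab hx]
    have hw2 : Real.sqrt (a * b) ^ 2 = a * b := Real.sq_sqrt (mul_pos ha hb).le
    have hS2 : Real.sqrt ((b - x) * (x - a)) ^ 2 = (b - x) * (x - a) := Real.sq_sqrt hq.le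
    set S := Real.sqrt ((b - x) * (x - a))
    set W := Real.sqrt (a * b)
    rw [hC]
    field_simp
    ring_nf
    linear_combination
      (64*S^2*x^9*((b-a)*(2*a*b*(a+b) - 5*x*a*b - x*(a^2+a*b+b^2) + 2*x^2*(a+b)
        + 2*S^2*(a+b)))*(W^2+a*b)
        + (W^2+a*b)*(S^2*(320*a*b^2*x^10 - 128*a*b^3*x^9 + 32*a*x - 320*a^2*b*x^10 + 128*a^2*x^11 + 128*a^3*b*x^9 - 64*a^3*x^10 + 32*b*x - 128*b^2*x^11 + 64*b^3*x^10) + S^4*x^9*128*(a^2-b^2) + (-96*a*b*x^2 + 32*a*b^2*x + 32*a*x^3 + 32*a^2*b*x - 16*a^2*x^2 + 32*b*x^3 - 16*b^2*x^2))) * hw2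
      + (128*S^2*x^9*a^2*b^2*(b-a)*(a+b)
        + a^2*b^2*(128*x^9*(a^2-b^2)*S^2 + ((320*a*b^2*x^10 - 128*a*b^3*x^9 + 32*a*x - 320*a^2*b*x^10 + 128*a^2*x^11 + 128*a^3*b*x^9 - 64*a^3*x^10 + 32*b*x - 128*b^2*x^11 + 64*b^3*x^10) + 64*x^10*(b-a)^3) + 128*x^9*(a^2-b^2)*((b-x)*(x-a)))) * hS2
  have hint : IntervalIntegrable (fun x => Real.sqrt ((b - x) * (x - a)) / x ^ 3)
      MeasureTheory.volume a b := by
    apply ContinuousOn.intervalIntegrable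
    apply ContinuousOn.div
    · exact (Real.continuous_sqrt.comp hcq).continuousOn
    · exact (continuous_pow 3).continuousOn
    · intro x hx
      rw [uIcc_of_le hab.le] at hx
      have : 0 < x := lt_of_lt_of_le ha hx.1
      positivity
  have hFa : Filter.Tendsto F (nhdsWithin a (Ioi a)) (nhds (F a)) :=
    ((hcont a ha.ne' (by positivity)).tendsto).mono_left nhdsWithin_le_nhds
  have hFb : Filter.Tendsto F (nhdsWithin b (Iio b)) (nhds (F b)) :=
    ((hcont b hb.ne' (by positivity)).tendsto).mono_left nhdsWithin_le_nhds
  rw [integral_eq_sub_of_hasDerivAt_of_tendsto hab hderiv hint hFa hFb]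
  have hMa : ((a + b) * a - 2 * (a * b)) / ((b - a) * a) = -1 := by
    rw [div_eq_iff (by positivity)]; ring
  have hMb : ((a + b) * b - 2 * (a * b)) / ((b - a) * b) = 1 := by
    rw [div_eq_iff (by positivity)]; ring
  simp only [hF, hMa, hMb, Real.arcsin_one, Real.arcsin_neg_one]
  rw [show (b - b) * (b - a) = 0 by ring, show (b - a) * (a - a) = 0 by ring,
    Real.sqrt_zero]
  rw [hC]
  field_simp
  ring

end aux


/-- Density of the free Poisson (Marchenko–Pastur) distribution `fp(p)` for `p > 1`:
`√(((√p+1)² - x)(x - (√p-1)²))/(2πx)` on `((√p-1)², (√p+1)²)`. -/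
noncomputable def fpDensity (p : ℝ) (x : ℝ) : ℝ :=
  Real.sqrt (((Real.sqrt p + 1) ^ 2 - x) * (x - (Real.sqrt p - 1) ^ 2)) / (2 * Real.pi * x)

/-- The free Poisson (Marchenko–Pastur) distribution `fp(p)` for `p > 1`. -/
noncomputable def fpMeasure (p : ℝ) : Measure ℝ :=
  MeasureTheory.volume.withDensity
    (fun x => ENNReal.ofReal
      ((Set.Ioo ((Real.sqrt p - 1) ^ 2) ((Real.sqrt p + 1) ^ 2)).indicator (fpDensity p) x))

lemma one_lt_sqrt_p {p : ℝ} (hp : 1 < p) : 1 < Real.sqrt p := by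
  rw [show (1:ℝ) = Real.sqrt 1 by simp]
  exact Real.sqrt_lt_sqrt (by norm_num) hp

lemma fpInt (p : ℝ) (hp : 1 < p) (g : ℝ → ℝ) (hg : Measurable g) :
    (∫ x, g x ∂(fpMeasure p))
      = ∫ x in ((Real.sqrt p - 1) ^ 2)..((Real.sqrt p + 1) ^ 2), fpDensity p x * g x := by
  have hr := one_lt_sqrt_p hp
  set a := (Real.sqrt p - 1) ^ 2 with hadef
  set b := (Real.sqrt p + 1) ^ 2 with hbdef
  have ha : 0 < a := by
    rw [hadef]; have h1 : 0 < Real.sqrt p - 1 := by linarith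
    exact pow_pos h1 2
  have hab : a < b := by rw [hadef, hbdef]; nlinarith
  have hdm : Measurable (fpDensity p) := by
    unfold fpDensity
    fun_prop
  have hmeas : Measurable fun x => (Set.indicator (Ioo a b) (fpDensity p) x).toNNReal :=
    (hdm.indicator measurableSet_Ioo).real_toNNReal
  rw [show fpMeasure p = MeasureTheory.volume.withDensity
      (fun x => (((Set.indicator (Ioo a b) (fpDensity p) x).toNNReal : ℝ≥0) : ℝ≥0∞)) from rfl,
    integral_withDensity_eq_integral_smul hmeas g]
  have hpt : ∀ x, ((Set.indicator (Ioo a b) (fpDensity p) x).toNNReal : ℝ≥0) • g x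
      = Set.indicator (Ioo a b) (fun x => fpDensity p x * g x) x := by
    intro x
    rw [NNReal.smul_def]
    by_cases hx : x ∈ Ioo a b
    · rw [Set.indicator_of_mem hx, Set.indicator_of_mem hx]
      have hx0 : 0 < x := lt_trans ha hx.1
      have hnn : 0 ≤ fpDensity p x := by
        unfold fpDensity
        apply div_nonneg (Real.sqrt_nonneg _)
        positivity
      rw [Real.coe_toNNReal _ hnn, smul_eq_mul]
    · rw [Set.indicator_of_notMem hx, Set.indicator_of_notMem hx]
      simp
  simp_rw [hpt]
  rw [MeasureTheory.integral_indicator measurableSet_Ioo,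
    ← MeasureTheory.integral_Ioc_eq_integral_Ioo,
    ← intervalIntegral.integral_of_le hab.le]

/-- For `p > 1`, the negative-order moments of `fp(p)` satisfy
`m_{-1}(fp(p)) = 1/(p-1)` and `m_{-2}(fp(p)) = p/(p-1)³`. -/
theorem fp_negative_moments (p : ℝ) (hp : 1 < p) :
    (∫ x : ℝ, x ^ (-1 : ℤ) ∂(fpMeasure p)) = 1 / (p - 1) ∧
    (∫ x : ℝ, x ^ (-2 : ℤ) ∂(fpMeasure p)) = p / (p - 1) ^ 3 := by
  have hr := one_lt_sqrt_p hp
  have hr2 : Real.sqrt p ^ 2 = p := Real.sq_sqrt (by linarith)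
  set a := (Real.sqrt p - 1) ^ 2 with hadef
  set b := (Real.sqrt p + 1) ^ 2 with hbdef
  have ha : 0 < a := by
    rw [hadef]; have h1 : 0 < Real.sqrt p - 1 := by linarith
    exact pow_pos h1 2
  have hab : a < b := by rw [hadef, hbdef]; nlinarith
  have hp1 : (0:ℝ) < p - 1 := by linarith
  have hW : Real.sqrt (a * b) = p - 1 := by
    rw [hadef, hbdef, show (Real.sqrt p - 1) ^ 2 * (Real.sqrt p + 1) ^ 2
      = (Real.sqrt p ^ 2 - 1) ^ 2 by ring, hr2]
    exact Real.sqrt_sq hp1.le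
  have hsum : a + b = 2 * p + 2 := by
    rw [hadef, hbdef]; nlinarith
  have hdiff : (b - a) ^ 2 = 16 * p := by
    rw [hadef, hbdef]; nlinarith
  have hpi := Real.pi_pos
  constructor
  · rw [fpInt p hp _ (by fun_prop : Measurable fun x : ℝ => x ^ (-1 : ℤ))]
    have hcg : ∀ x ∈ uIcc a b, fpDensity p x * x ^ (-1 : ℤ)
        = (2 * Real.pi)⁻¹ * (Real.sqrt ((b - x) * (x - a)) / x ^ 2) := by
      intro x hx
      rw [uIcc_of_le hab.le] at hx
      have hx0 : 0 < x := lt_of_lt_of_le ha hx.1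
      unfold fpDensity
      rw [zpow_neg, zpow_one]
      rw [hbdef, hadef]
      field_simp
    rw [intervalIntegral.integral_congr hcg, intervalIntegral.integral_const_mul,
      hJ2 ha hab, hW, hsum]
    field_simp
    ring
  · rw [fpInt p hp _ (by fun_prop : Measurable fun x : ℝ => x ^ (-2 : ℤ))]
    have hcg : ∀ x ∈ uIcc a b, fpDensity p x * x ^ (-2 : ℤ)
        = (2 * Real.pi)⁻¹ * (Real.sqrt ((b - x) * (x - a)) / x ^ 3) := by
      intro x hx
      rw [uIcc_of_le hab.le] at hx
      have hx0 : 0 < x := lt_of_lt_of_le ha hx.1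
      unfold fpDensity
      rw [zpow_neg, show ((2:ℤ) : ℤ) = (2:ℕ) by norm_num, zpow_natCast]
      rw [hbdef, hadef]
      field_simp
    rw [intervalIntegral.integral_congr hcg, intervalIntegral.integral_const_mul,
      hJ3 ha hab, hW, hdiff]
    field_simp
    ring
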